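/- The Bellman equation for V has at most one bounded solution: let h, l : ℝⁿ → ℝ be bounded functions; if W₁, W₂ : ℝⁿ → ℝ are bounded functions such that for all x ∈ ℝⁿ, W_i(x) = min( l(x), max( h(x), γ · sup over u ∈ U of inf over d ∈ D of W_i(f(x,u,d)) ) ) for i = 1, 2, then W₁ = W₂. -/

import Mathlib

open Set

lemma aux_abs_min (a b c : ℝ) : |min a b - min a c| ≤ |b - c| := by
  rcases le_total a b with h1 | h1 <;> rcases le_total a c with h2 | h2 <;>
    rcases abs_cases (b - c) with ⟨h3, h4⟩ | ⟨h3, h4⟩ <;>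
    rw [abs_le] <;> constructor <;>
    simp [min_eq_left, min_eq_right, h1, h2] <;> linarith

lemma aux_abs_max (a b c : ℝ) : |max a b - max a c| ≤ |b - c| := by
  rcases le_total b a with h1 | h1 <;> rcases le_total c a with h2 | h2 <;>
    rcases abs_cases (b - c) with ⟨h3, h4⟩ | ⟨h3, h4⟩ <;>
    rw [abs_le] <;> constructor <;>
    simp [max_eq_left, max_eq_right, h1, h2] <;> linarith

/-- the Bellman equation for `V` has at most one bounded solution. -/
theorem bellman_V_unique {n mu md : ℕ} (U : Set (Fin mu → ℝ)) (D : Set (Fin md → ℝ))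
    (hU : U.Nonempty) (hD : D.Nonempty)
    (f : (Fin n → ℝ) → (Fin mu → ℝ) → (Fin md → ℝ) → (Fin n → ℝ))
    (γ : ℝ) (hγ : γ ∈ Set.Ioo (0 : ℝ) 1)
    (h l : (Fin n → ℝ) → ℝ)
    (hh : ∃ M, ∀ y, |h y| ≤ M) (hl : ∃ M, ∀ y, |l y| ≤ M)
    (W₁ W₂ : (Fin n → ℝ) → ℝ)
    (hW₁ : ∃ M, ∀ y, |W₁ y| ≤ M) (hW₂ : ∃ M, ∀ y, |W₂ y| ≤ M)
    (hB₁ : ∀ x, W₁ x = min (l x) (max (h x) (γ * ⨆ u : U, ⨅ d : D, W₁ (f x u d))))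
    (hB₂ : ∀ x, W₂ x = min (l x) (max (h x) (γ * ⨆ u : U, ⨅ d : D, W₂ (f x u d)))) :
    W₁ = W₂ := by
  obtain ⟨M₁, hM₁⟩ := hW₁
  obtain ⟨M₂, hM₂⟩ := hW₂
  obtain ⟨γ0, γ1⟩ := hγ
  have hne : Nonempty (Fin n → ℝ) := ⟨0⟩
  have hDne : Nonempty D := hD.to_subtype
  have hUne : Nonempty U := hU.to_subtype
  have hgbdd : BddAbove (range fun x => |W₁ x - W₂ x|) := by
    refine ⟨M₁ + M₂, ?_⟩
    rintro _ ⟨x, rfl⟩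
    calc |W₁ x - W₂ x| ≤ |W₁ x| + |W₂ x| := abs_sub _ _
      _ ≤ M₁ + M₂ := add_le_add (hM₁ x) (hM₂ x)
  set S := ⨆ x, |W₁ x - W₂ x| with hSdef
  have hS_le : ∀ x, |W₁ x - W₂ x| ≤ S := fun x => le_ciSup hgbdd x
  have hS0 : 0 ≤ S :=
    le_trans (abs_nonneg _) (hS_le (Classical.arbitrary _))
  -- boundedness of the inner families
  have hbb₁ : ∀ x u, BddBelow (range fun d : D => W₁ (f x u d)) := by
    intro x u
    exact ⟨-M₁, by rintro _ ⟨d, rfl⟩; exact neg_le_of_abs_le (hM₁ _)⟩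
  have hbb₂ : ∀ x u, BddBelow (range fun d : D => W₂ (f x u d)) := by
    intro x u
    exact ⟨-M₂, by rintro _ ⟨d, rfl⟩; exact neg_le_of_abs_le (hM₂ _)⟩
  have hinf₁_le : ∀ x u, (⨅ d : D, W₁ (f x u d)) ≤ M₁ := by
    intro x u
    exact le_trans (ciInf_le (hbb₁ x u) (Classical.arbitrary _)) (le_of_abs_le (hM₁ _))
  have hinf₂_le : ∀ x u, (⨅ d : D, W₂ (f x u d)) ≤ M₂ := by
    intro x u
    exact le_trans (ciInf_le (hbb₂ x u) (Classical.arbitrary _)) (le_of_abs_le (hM₂ _))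
  have hba₁ : ∀ x, BddAbove (range fun u : U => ⨅ d : D, W₁ (f x u d)) :=
    fun x => ⟨M₁, by rintro _ ⟨u, rfl⟩; exact hinf₁_le x u⟩
  have hba₂ : ∀ x, BddAbove (range fun u : U => ⨅ d : D, W₂ (f x u d)) :=
    fun x => ⟨M₂, by rintro _ ⟨u, rfl⟩; exact hinf₂_le x u⟩
  -- contraction
  have key : ∀ x, |W₁ x - W₂ x| ≤ γ * S := by
    intro x
    have hinf12 : ∀ u : U, (⨅ d : D, W₁ (f x u d)) ≤ (⨅ d : D, W₂ (f x u d)) + S := by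
      intro u
      rw [← sub_le_iff_le_add]
      refine le_ciInf fun d => ?_
      have h1 : (⨅ d : D, W₁ (f x u d)) ≤ W₁ (f x u d) := ciInf_le (hbb₁ x u) d
      have h2 : W₁ (f x u d) - W₂ (f x u d) ≤ S :=
        le_trans (le_abs_self _) (hS_le _)
      linarith
    have hinf21 : ∀ u : U, (⨅ d : D, W₂ (f x u d)) ≤ (⨅ d : D, W₁ (f x u d)) + S := by
      intro u
      rw [← sub_le_iff_le_add]
      refine le_ciInf fun d => ?_
      have h1 : (⨅ d : D, W₂ (f x u d)) ≤ W₂ (f x u d) := ciInf_le (hbb₂ x u) d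
      have h2 : W₂ (f x u d) - W₁ (f x u d) ≤ S := by
        refine le_trans ?_ (hS_le (f x u d))
        rw [abs_sub_comm]
        exact le_abs_self _
      linarith
    have hsup12 : (⨆ u : U, ⨅ d : D, W₁ (f x u d)) ≤ (⨆ u : U, ⨅ d : D, W₂ (f x u d)) + S := by
      refine ciSup_le fun u => ?_
      exact le_trans (hinf12 u) (add_le_add_left (le_ciSup (hba₂ x) u) S)
    have hsup21 : (⨆ u : U, ⨅ d : D, W₂ (f x u d)) ≤ (⨆ u : U, ⨅ d : D, W₁ (f x u d)) + S := by
      refine ciSup_le fun u => ?_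
      exact le_trans (hinf21 u) (add_le_add_left (le_ciSup (hba₁ x) u) S)
    have hsupabs : |(⨆ u : U, ⨅ d : D, W₁ (f x u d)) - (⨆ u : U, ⨅ d : D, W₂ (f x u d))| ≤ S := by
      rw [abs_sub_le_iff]
      constructor <;> linarith
    calc |W₁ x - W₂ x|
        = |min (l x) (max (h x) (γ * ⨆ u : U, ⨅ d : D, W₁ (f x u d)))
            - min (l x) (max (h x) (γ * ⨆ u : U, ⨅ d : D, W₂ (f x u d)))| := by
          rw [hB₁ x, hB₂ x]
      _ ≤ |max (h x) (γ * ⨆ u : U, ⨅ d : D, W₁ (f x u d))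
            - max (h x) (γ * ⨆ u : U, ⨅ d : D, W₂ (f x u d))| := aux_abs_min _ _ _
      _ ≤ |γ * (⨆ u : U, ⨅ d : D, W₁ (f x u d)) - γ * (⨆ u : U, ⨅ d : D, W₂ (f x u d))| :=
          aux_abs_max _ _ _
      _ = γ * |(⨆ u : U, ⨅ d : D, W₁ (f x u d)) - (⨆ u : U, ⨅ d : D, W₂ (f x u d))| := by
          rw [← mul_sub, abs_mul, abs_of_pos γ0]
      _ ≤ γ * S := by
          exact mul_le_mul_of_nonneg_left hsupabs (le_of_lt γ0)
  have hcontr : S ≤ γ * S := ciSup_le key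
  have hSzero : S ≤ 0 := by nlinarith
  funext x
  have h1 : |W₁ x - W₂ x| ≤ 0 := le_trans (hS_le x) hSzero
  have h2 : W₁ x - W₂ x = 0 := abs_eq_zero.mp (le_antisymm h1 (abs_nonneg _))
  linarith
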